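/- For ΣΠ_A-terms with the bag-of-cut-heights measure Λ: (i) if t₁ ⟹ t₂ by one of the cut-elimination rewrites (1)–(12) applied in any term context, then Λ(t₂) is strictly below Λ(t₁) in the Dershowitz–Manna multiset ordering on multisets of natural numbers; (ii) if t₁ ≡ t₂ by a single permuting conversion among (13)–(22) that does not involve a nullary cotuple or nullary tuple, then Λ(t₁) = Λ(t₂). -/

import Mathlib

/-!
STATEMENT 1: For ΣΠ_A-terms with the bag-of-cut-heights measure Λ:
(i) each cut-elimination rewrite (1)–(12), applied in any term context,
strictly decreases Λ in the Dershowitz–Manna multiset ordering on `Multiset ℕ`;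
(ii) each permuting conversion (13)–(22) not involving a nullary cotuple or
nullary tuple leaves Λ unchanged.
-/

namespace Stmt1

/-- ΣΠ_A-terms: identities on atoms, atomic maps of the polycategory `A`
(elements of `Ax`), cotuples, tuples, projections, injections and cuts.
Channels carry names from `Chan`; events are represented by positions. -/
inductive Tm (Ax Chan : Type) : Type where
  | id : Chan → Chan → Tm Ax Chan
  | ax : Ax → Tm Ax Chan
  | cot : Chan → List (Tm Ax Chan) → Tm Ax Chan
  | tup : Chan → List (Tm Ax Chan) → Tm Ax Chan
  | prj : Chan → ℕ → Tm Ax Chan → Tm Ax Chan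
  | inj : Chan → ℕ → Tm Ax Chan → Tm Ax Chan
  | cut : Chan → Tm Ax Chan → Tm Ax Chan → Tm Ax Chan

variable {Ax Chan : Type}

/-- The one-step cut-elimination rewrites (1)–(12), closed under all term
contexts. -/
inductive Red : Tm Ax Chan → Tm Ax Chan → Prop where
  | r1 (γ β : Chan) (f : Tm Ax Chan) : Red (.cut γ f (.id γ β)) f
  | r2 (γ α : Chan) (g : Tm Ax Chan) : Red (.cut γ (.id α γ) g) g
  | r3 (γ α : Chan) (fs : List (Tm Ax Chan)) (g : Tm Ax Chan) :
      Red (.cut γ (.cot α fs) g) (.cot α (fs.map fun f => .cut γ f g))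
  | r4 (γ β : Chan) (f : Tm Ax Chan) (gs : List (Tm Ax Chan)) :
      Red (.cut γ f (.tup β gs)) (.tup β (gs.map fun g => .cut γ f g))
  | r5 (γ α : Chan) (k : ℕ) (f g : Tm Ax Chan) : α ≠ γ →
      Red (.cut γ (.inj α k f) g) (.inj α k (.cut γ f g))
  | r6 (γ β : Chan) (k : ℕ) (f g : Tm Ax Chan) : β ≠ γ →
      Red (.cut γ f (.prj β k g)) (.prj β k (.cut γ f g))
  | r7 (γ α : Chan) (k : ℕ) (f g : Tm Ax Chan) :
      Red (.cut γ (.prj α k f) g) (.prj α k (.cut γ f g))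
  | r8 (γ β : Chan) (k : ℕ) (f g : Tm Ax Chan) :
      Red (.cut γ f (.inj β k g)) (.inj β k (.cut γ f g))
  | r9 (γ α : Chan) (fs : List (Tm Ax Chan)) (g : Tm Ax Chan) : α ≠ γ →
      Red (.cut γ (.tup α fs) g) (.tup α (fs.map fun f => .cut γ f g))
  | r10 (γ β : Chan) (f : Tm Ax Chan) (gs : List (Tm Ax Chan)) : β ≠ γ →
      Red (.cut γ f (.cot β gs)) (.cot β (gs.map fun g => .cut γ f g))
  | r11 (γ : Chan) (k : ℕ) (f : Tm Ax Chan) (gs : List (Tm Ax Chan)) (hk : k < gs.length) :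
      Red (.cut γ (.inj γ k f) (.cot γ gs)) (.cut γ f (gs.get ⟨k, hk⟩))
  | r12 (γ : Chan) (k : ℕ) (fs : List (Tm Ax Chan)) (g : Tm Ax Chan) (hk : k < fs.length) :
      Red (.cut γ (.tup γ fs) (.prj γ k g)) (.cut γ (fs.get ⟨k, hk⟩) g)
  | cotC (α : Chan) (l r : List (Tm Ax Chan)) {f f' : Tm Ax Chan} :
      Red f f' → Red (.cot α (l ++ f :: r)) (.cot α (l ++ f' :: r))
  | tupC (α : Chan) (l r : List (Tm Ax Chan)) {f f' : Tm Ax Chan} :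
      Red f f' → Red (.tup α (l ++ f :: r)) (.tup α (l ++ f' :: r))
  | prjC (α : Chan) (k : ℕ) {f f' : Tm Ax Chan} :
      Red f f' → Red (.prj α k f) (.prj α k f')
  | injC (α : Chan) (k : ℕ) {f f' : Tm Ax Chan} :
      Red f f' → Red (.inj α k f) (.inj α k f')
  | cutL (γ : Chan) {f f' : Tm Ax Chan} (g : Tm Ax Chan) :
      Red f f' → Red (.cut γ f g) (.cut γ f' g)
  | cutR (γ : Chan) (f : Tm Ax Chan) {g g' : Tm Ax Chan} :
      Red g g' → Red (.cut γ f g) (.cut γ f g')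

/-- The permuting conversions (13)–(22) that do not involve a nullary cotuple
or a nullary tuple (all the interchanged (co)tuples are indexed by nonempty
families); a symmetric relation closed under all term contexts. -/
inductive PcNN : Tm Ax Chan → Tm Ax Chan → Prop where
  | c13 (α β : Chan) (n m : ℕ) (F : ℕ → ℕ → Tm Ax Chan) :
      α ≠ β → 0 < n → 0 < m →
      PcNN (.cot α ((List.range n).map fun i => .cot β ((List.range m).map fun j => F i j)))
           (.cot β ((List.range m).map fun j => .cot α ((List.range n).map fun i => F i j)))
  | c14 (α β : Chan) (n m : ℕ) (F : ℕ → ℕ → Tm Ax Chan) :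
      α ≠ β → 0 < n → 0 < m →
      PcNN (.tup α ((List.range n).map fun i => .tup β ((List.range m).map fun j => F i j)))
           (.tup β ((List.range m).map fun j => .tup α ((List.range n).map fun i => F i j)))
  | c15 (α β : Chan) (n k : ℕ) (F : ℕ → Tm Ax Chan) :
      α ≠ β → 0 < n →
      PcNN (.cot α ((List.range n).map fun i => .inj β k (F i)))
           (.inj β k (.cot α ((List.range n).map fun i => F i)))
  | c16 (α β : Chan) (m k : ℕ) (F : ℕ → Tm Ax Chan) :
      α ≠ β → 0 < m →
      PcNN (.prj α k (.tup β ((List.range m).map fun j => F j)))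
           (.tup β ((List.range m).map fun j => .prj α k (F j)))
  | c17 (α β : Chan) (n k : ℕ) (F : ℕ → Tm Ax Chan) :
      α ≠ β → 0 < n →
      PcNN (.cot α ((List.range n).map fun i => .prj β k (F i)))
           (.prj β k (.cot α ((List.range n).map fun i => F i)))
  | c18 (α β : Chan) (m k : ℕ) (F : ℕ → Tm Ax Chan) :
      α ≠ β → 0 < m →
      PcNN (.inj α k (.tup β ((List.range m).map fun j => F j)))
           (.tup β ((List.range m).map fun j => .inj α k (F j)))
  | c19 (α β : Chan) (n m : ℕ) (F : ℕ → ℕ → Tm Ax Chan) :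
      α ≠ β → 0 < n → 0 < m →
      PcNN (.cot α ((List.range n).map fun i => .tup β ((List.range m).map fun j => F i j)))
           (.tup β ((List.range m).map fun j => .cot α ((List.range n).map fun i => F i j)))
  | c20 (α β : Chan) (k l : ℕ) (f : Tm Ax Chan) : α ≠ β →
      PcNN (.inj α k (.inj β l f)) (.inj β l (.inj α k f))
  | c21 (α β : Chan) (k l : ℕ) (f : Tm Ax Chan) : α ≠ β →
      PcNN (.prj α k (.prj β l f)) (.prj β l (.prj α k f))
  | c22 (α β : Chan) (k l : ℕ) (f : Tm Ax Chan) : α ≠ β →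
      PcNN (.inj α k (.prj β l f)) (.prj β l (.inj α k f))
  | symm {t s : Tm Ax Chan} : PcNN t s → PcNN s t
  | cotC (α : Chan) (l r : List (Tm Ax Chan)) {f f' : Tm Ax Chan} :
      PcNN f f' → PcNN (.cot α (l ++ f :: r)) (.cot α (l ++ f' :: r))
  | tupC (α : Chan) (l r : List (Tm Ax Chan)) {f f' : Tm Ax Chan} :
      PcNN f f' → PcNN (.tup α (l ++ f :: r)) (.tup α (l ++ f' :: r))
  | prjC (α : Chan) (k : ℕ) {f f' : Tm Ax Chan} :
      PcNN f f' → PcNN (.prj α k f) (.prj α k f')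
  | injC (α : Chan) (k : ℕ) {f f' : Tm Ax Chan} :
      PcNN f f' → PcNN (.inj α k f) (.inj α k f')
  | cutL (γ : Chan) {f f' : Tm Ax Chan} (g : Tm Ax Chan) :
      PcNN f f' → PcNN (.cut γ f g) (.cut γ f' g)
  | cutR (γ : Chan) (f : Tm Ax Chan) {g g' : Tm Ax Chan} :
      PcNN g g' → PcNN (.cut γ f g) (.cut γ f g')

mutual
/-- The height of a ΣΠ-term. -/
def hgt : Tm Ax Chan → ℕ
  | .id _ _ => 1
  | .ax _ => 1
  | .cot _ fs => 1 + hgtL fs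
  | .tup _ fs => 1 + hgtL fs
  | .prj _ _ f => 1 + hgt f
  | .inj _ _ f => 1 + hgt f
  | .cut _ f g => hgt f + hgt g

/-- The maximum of the heights of a list of terms (`0` for the empty list). -/
def hgtL : List (Tm Ax Chan) → ℕ
  | [] => 0
  | f :: fs => max (hgt f) (hgtL fs)
end

mutual
/-- `Λ`: the bag (multiset) of the heights of all cut subterms of a term. -/
def lam : Tm Ax Chan → Multiset ℕ
  | .id _ _ => 0
  | .ax _ => 0
  | .cot _ fs => lamL fs
  | .tup _ fs => lamL fs
  | .prj _ _ f => lam f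
  | .inj _ _ f => lam f
  | .cut γ f g => hgt (Tm.cut γ f g) ::ₘ (lam f + lam g)

def lamL : List (Tm Ax Chan) → Multiset ℕ
  | [] => 0
  | f :: fs => lam f + lamL fs
end

/-- Dershowitz–Manna multiset ordering on multisets of natural numbers:
`N` is strictly below `M`. -/
def DMlt (N M : Multiset ℕ) : Prop :=
  ∃ X Y : Multiset ℕ, X ≠ 0 ∧ X ≤ M ∧ N = M - X + Y ∧ ∀ y ∈ Y, ∃ x ∈ X, y < x


theorem hgt_pos : ∀ t : Tm Ax Chan, 1 ≤ hgt t
  | .id _ _ => le_refl _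
  | .ax _ => le_refl _
  | .cot _ _ => by simp [hgt]
  | .tup _ _ => by simp [hgt]
  | .prj _ _ _ => by simp [hgt]
  | .inj _ _ _ => by simp [hgt]
  | .cut _ f g => le_trans (hgt_pos f) (Nat.le_add_right _ _)

theorem hgt_mem_le {f : Tm Ax Chan} : ∀ {fs : List (Tm Ax Chan)}, f ∈ fs → hgt f ≤ hgtL fs
  | _ :: _, h => by
    rcases List.mem_cons.1 h with h | h
    · subst h; simp [hgtL]
    · exact le_trans (hgt_mem_le h) (by simp [hgtL])

theorem hgtL_append : ∀ (l r : List (Tm Ax Chan)), hgtL (l ++ r) = max (hgtL l) (hgtL r)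
  | [], r => by simp [hgtL]
  | f :: l, r => by simp [hgtL, hgtL_append l r, max_assoc]

theorem lamL_append : ∀ (l r : List (Tm Ax Chan)), lamL (l ++ r) = lamL l + lamL r
  | [], r => by simp [lamL]
  | f :: l, r => by simp [lamL, lamL_append l r, add_assoc]

theorem mem_lamL {y : ℕ} : ∀ {fs : List (Tm Ax Chan)}, y ∈ lamL fs → ∃ f ∈ fs, y ∈ lam f
  | f :: fs, h => by
    rcases Multiset.mem_add.1 h with h | h
    · exact ⟨f, List.mem_cons_self .., h⟩
    · obtain ⟨g, hg, hy⟩ := mem_lamL h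
      exact ⟨g, List.mem_cons_of_mem _ hg, hy⟩

mutual
theorem lam_le_hgt : ∀ (t : Tm Ax Chan), ∀ y ∈ lam t, y ≤ hgt t
  | .id _ _ => by simp [lam]
  | .ax _ => by simp [lam]
  | .cot _ fs => fun y hy => le_trans (lamL_le_hgtL fs y hy) (by simp [hgt])
  | .tup _ fs => fun y hy => le_trans (lamL_le_hgtL fs y hy) (by simp [hgt])
  | .prj _ _ f => fun y hy => le_trans (lam_le_hgt f y hy) (by simp [hgt])
  | .inj _ _ f => fun y hy => le_trans (lam_le_hgt f y hy) (by simp [hgt])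
  | .cut γ f g => fun y hy => by
      simp only [lam, Multiset.mem_cons, Multiset.mem_add] at hy
      rcases hy with h | h | h
      · exact le_of_eq h
      · exact le_trans (lam_le_hgt f y h) (by simp [hgt])
      · exact le_trans (lam_le_hgt g y h) (by simp [hgt])
theorem lamL_le_hgtL : ∀ (fs : List (Tm Ax Chan)), ∀ y ∈ lamL fs, y ≤ hgtL fs
  | [] => by simp [lamL]
  | f :: fs => fun y hy => by
      rcases Multiset.mem_add.1 hy with h | h
      · exact le_trans (lam_le_hgt f y h) (by simp [hgtL])
      · exact le_trans (lamL_le_hgtL fs y h) (by simp [hgtL])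
end

theorem dmlt_all {N M : Multiset ℕ} {H : ℕ} (hH : H ∈ M) (h : ∀ y ∈ N, y < H) :
    DMlt N M :=
  ⟨M, N, by rintro rfl; simp at hH, le_refl _, by simp [tsub_self],
    fun y hy => ⟨H, hH, h y hy⟩⟩

theorem dmlt_add {N M : Multiset ℕ} (C : Multiset ℕ) (h : DMlt N M) :
    DMlt (N + C) (M + C) := by
  obtain ⟨X, Y, hX0, hXM, hN, hY⟩ := h
  refine ⟨X, Y, hX0, le_trans hXM (Multiset.le_add_right _ _), ?_, hY⟩
  subst hN
  rw [tsub_add_eq_add_tsub hXM,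
    tsub_add_eq_add_tsub (le_trans hXM (Multiset.le_add_right M Y)),
    tsub_add_eq_add_tsub (le_trans hXM (Multiset.le_add_right M C)),
    add_right_comm M Y C]

theorem dmlt_cons_add {N M : Multiset ℕ} (C : Multiset ℕ) {h' h : ℕ} (hh : h' ≤ h)
    (hd : DMlt N M) : DMlt (h' ::ₘ (N + C)) (h ::ₘ (M + C)) := by
  rcases eq_or_lt_of_le hh with heq | hlt
  · subst heq
    simpa [Multiset.add_cons] using dmlt_add ((h' ::ₘ C) : Multiset ℕ) hd
  · obtain ⟨X, Y, hX0, hXM, hN, hY⟩ := hd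
    have hXMC : X ≤ M + C := le_trans hXM (Multiset.le_add_right _ _)
    refine ⟨h ::ₘ X, h' ::ₘ Y, by simp, Multiset.cons_le_cons _ hXMC, ?_, ?_⟩
    · have h1 : (h ::ₘ (M + C)) - (h ::ₘ X) = (M + C) - X := by
        rw [← Multiset.singleton_add, ← Multiset.singleton_add,
          add_tsub_add_eq_tsub_left]
      subst hN
      rw [h1, ← tsub_add_eq_add_tsub hXM, Multiset.add_cons]
      congr 1
      exact add_right_comm _ _ _
    · intro y hy
      rcases Multiset.mem_cons.1 hy with rfl | hy
      · exact ⟨h, Multiset.mem_cons_self _ _, hlt⟩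
      · obtain ⟨x, hx, hxy⟩ := hY y hy
        exact ⟨x, Multiset.mem_cons_of_mem hx, hxy⟩

theorem lamL_map_range (G : ℕ → Tm Ax Chan) :
    ∀ n, lamL ((List.range n).map G) = ∑ i ∈ Finset.range n, lam (G i)
  | 0 => by simp [lamL]
  | n + 1 => by
      rw [List.range_succ, List.map_append, lamL_append, Finset.sum_range_succ,
        lamL_map_range G n]
      simp [lamL]

theorem hgtL_map_range (G : ℕ → Tm Ax Chan) :
    ∀ n, hgtL ((List.range n).map G) = (Finset.range n).sup fun i => hgt (G i)
  | 0 => by simp [hgtL]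
  | n + 1 => by
      rw [List.range_succ, List.map_append, hgtL_append, Finset.range_add_one,
        Finset.sup_insert, hgtL_map_range G n]
      simp [hgtL, max_comm]

theorem sup_range_add (c : ℕ) (h : ℕ → ℕ) :
    ∀ n, 0 < n →
      (Finset.range n).sup (fun i => c + h i) = c + (Finset.range n).sup h
  | 1, _ => by simp
  | n + 2, _ => by
      rw [Finset.range_add_one, Finset.sup_insert, Finset.sup_insert,
        sup_range_add c h (n+1) (Nat.succ_pos _)]
      exact max_add_add_left _ _ _
theorem hgtL_map_cutL (γ : Chan) (g : Tm Ax Chan) :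
    ∀ fs : List (Tm Ax Chan),
      hgtL (fs.map fun f => Tm.cut γ f g) ≤ hgtL fs + hgt g
  | [] => by simp [hgtL]
  | f :: fs => by
      simp only [List.map_cons, hgtL, hgt]
      exact max_le (add_le_add_left (le_max_left _ _) _)
        (le_trans (hgtL_map_cutL γ g fs) (add_le_add_left (le_max_right _ _) _))

theorem hgtL_map_cutR (γ : Chan) (f : Tm Ax Chan) :
    ∀ gs : List (Tm Ax Chan),
      hgtL (gs.map fun g => Tm.cut γ f g) ≤ hgt f + hgtL gs
  | [] => by simp [hgtL]
  | g :: gs => by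
      simp only [List.map_cons, hgtL, hgt]
      exact max_le (add_le_add_right (le_max_left _ _) _)
        (le_trans (hgtL_map_cutR γ f gs) (add_le_add_right (le_max_right _ _) _))

theorem dmlt_ctx {N M : Multiset ℕ} (C1 C2 : Multiset ℕ) (h : DMlt N M) :
    DMlt (C1 + (N + C2)) (C1 + (M + C2)) := by
  rw [add_left_comm C1 N C2, add_left_comm C1 M C2]
  exact dmlt_add (C1 + C2) h

theorem lamL_mem_bound {γ : Chan} {g : Tm Ax Chan} {fs : List (Tm Ax Chan)} {y : ℕ}
    (hy : y ∈ lamL (fs.map fun f => Tm.cut γ f g)) :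
    y ≤ hgtL fs + hgt g := by
  obtain ⟨t, ht, hyt⟩ := mem_lamL hy
  obtain ⟨f, hf, rfl⟩ := List.mem_map.1 ht
  have h1 := lam_le_hgt _ y hyt
  have h2 := hgt_mem_le hf
  simp only [hgt] at h1
  omega

theorem lamL_mem_boundR {γ : Chan} {f : Tm Ax Chan} {gs : List (Tm Ax Chan)} {y : ℕ}
    (hy : y ∈ lamL (gs.map fun g => Tm.cut γ f g)) :
    y ≤ hgt f + hgtL gs := by
  obtain ⟨t, ht, hyt⟩ := mem_lamL hy
  obtain ⟨g, hg, rfl⟩ := List.mem_map.1 ht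
  have h1 := lam_le_hgt _ y hyt
  have h2 := hgt_mem_le hg
  simp only [hgt] at h1
  omega

theorem red_main {t₁ t₂ : Tm Ax Chan} (h : Red t₁ t₂) :
    hgt t₂ ≤ hgt t₁ ∧ DMlt (lam t₂) (lam t₁) := by
  induction h with
  | r1 γ β f =>
      refine ⟨by simp [hgt], ?_⟩
      simp only [lam, add_zero]
      exact dmlt_all (Multiset.mem_cons_self _ _) fun y hy => by
        have := lam_le_hgt f y hy; simp only [hgt]; omega
  | r2 γ α g =>
      refine ⟨by simp [hgt], ?_⟩
      simp only [lam, zero_add]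
      exact dmlt_all (Multiset.mem_cons_self _ _) fun y hy => by
        have := lam_le_hgt g y hy; simp only [hgt]; omega
  | r3 γ α fs g =>
      refine ⟨?_, ?_⟩
      · have := hgtL_map_cutL γ g fs; simp only [hgt]; omega
      · simp only [lam]
        exact dmlt_all (Multiset.mem_cons_self _ _) fun y hy => by
          have := lamL_mem_bound hy; simp only [hgt]; omega
  | r4 γ β f gs =>
      refine ⟨?_, ?_⟩
      · have := hgtL_map_cutR γ f gs; simp only [hgt]; omega
      · simp only [lam]
        exact dmlt_all (Multiset.mem_cons_self _ _) fun y hy => by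
          have := lamL_mem_boundR hy; simp only [hgt]; omega
  | r9 γ α fs g _ =>
      refine ⟨?_, ?_⟩
      · have := hgtL_map_cutL γ g fs; simp only [hgt]; omega
      · simp only [lam]
        exact dmlt_all (Multiset.mem_cons_self _ _) fun y hy => by
          have := lamL_mem_bound hy; simp only [hgt]; omega
  | r10 γ β f gs _ =>
      refine ⟨?_, ?_⟩
      · have := hgtL_map_cutR γ f gs; simp only [hgt]; omega
      · simp only [lam]
        exact dmlt_all (Multiset.mem_cons_self _ _) fun y hy => by
          have := lamL_mem_boundR hy; simp only [hgt]; omega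
  | r5 γ α k f g _ =>
      refine ⟨by simp only [hgt]; omega, ?_⟩
      simp only [lam]
      exact dmlt_all (Multiset.mem_cons_self _ _) fun y hy => by
        have := lam_le_hgt (Tm.cut γ f g) y hy; simp only [hgt] at this ⊢; omega
  | r6 γ β k f g _ =>
      refine ⟨by simp only [hgt]; omega, ?_⟩
      simp only [lam]
      exact dmlt_all (Multiset.mem_cons_self _ _) fun y hy => by
        have := lam_le_hgt (Tm.cut γ f g) y hy; simp only [hgt] at this ⊢; omega
  | r7 γ α k f g =>
      refine ⟨by simp only [hgt]; omega, ?_⟩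
      simp only [lam]
      exact dmlt_all (Multiset.mem_cons_self _ _) fun y hy => by
        have := lam_le_hgt (Tm.cut γ f g) y hy; simp only [hgt] at this ⊢; omega
  | r8 γ β k f g =>
      refine ⟨by simp only [hgt]; omega, ?_⟩
      simp only [lam]
      exact dmlt_all (Multiset.mem_cons_self _ _) fun y hy => by
        have := lam_le_hgt (Tm.cut γ f g) y hy; simp only [hgt] at this ⊢; omega
  | r11 γ k f gs hk =>
      have hmem : gs.get ⟨k, hk⟩ ∈ gs := List.get_mem gs ⟨k, hk⟩
      have hle := hgt_mem_le (f := gs.get ⟨k, hk⟩) hmem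
      refine ⟨by simp only [hgt]; omega, ?_⟩
      simp only [lam]
      exact dmlt_all (Multiset.mem_cons_self _ _) fun y hy => by
        have := lam_le_hgt (Tm.cut γ f (gs.get ⟨k, hk⟩)) y hy
        simp only [hgt] at this ⊢; omega
  | r12 γ k fs g hk =>
      have hmem : fs.get ⟨k, hk⟩ ∈ fs := List.get_mem fs ⟨k, hk⟩
      have hle := hgt_mem_le (f := fs.get ⟨k, hk⟩) hmem
      refine ⟨by simp only [hgt]; omega, ?_⟩
      simp only [lam]
      exact dmlt_all (Multiset.mem_cons_self _ _) fun y hy => by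
        have := lam_le_hgt (Tm.cut γ (fs.get ⟨k, hk⟩) g) y hy
        simp only [hgt] at this ⊢; omega
  | cotC α l r _ ih =>
      refine ⟨?_, ?_⟩
      · simp only [hgt, hgtL_append, hgtL]
        exact add_le_add_right (max_le_max le_rfl (max_le_max ih.1 le_rfl)) 1
      · simp only [lam, lamL_append, lamL]
        exact dmlt_ctx _ _ ih.2
  | tupC α l r _ ih =>
      refine ⟨?_, ?_⟩
      · simp only [hgt, hgtL_append, hgtL]
        exact add_le_add_right (max_le_max le_rfl (max_le_max ih.1 le_rfl)) 1
      · simp only [lam, lamL_append, lamL]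
        exact dmlt_ctx _ _ ih.2
  | prjC α k _ ih =>
      exact ⟨add_le_add_right ih.1 1, ih.2⟩
  | injC α k _ ih =>
      exact ⟨add_le_add_right ih.1 1, ih.2⟩
  | cutL γ g _ ih =>
      refine ⟨add_le_add_left ih.1 _, ?_⟩
      simp only [lam, hgt]
      exact dmlt_cons_add _ (add_le_add_left ih.1 _) ih.2
  | cutR γ f _ ih =>
      refine ⟨add_le_add_right ih.1 _, ?_⟩
      simp only [lam, hgt]
      rw [add_comm (lam f), add_comm (lam f)]
      exact dmlt_cons_add _ (add_le_add_right ih.1 _) ih.2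
theorem pc_main {t₁ t₂ : Tm Ax Chan} (h : PcNN t₁ t₂) :
    hgt t₁ = hgt t₂ ∧ lam t₁ = lam t₂ := by
  induction h with
  | c13 α β n m F _ hn hm =>
      constructor
      · simp only [hgt, hgtL_map_range]
        rw [sup_range_add 1 _ n hn, sup_range_add 1 _ m hm, Finset.sup_comm]
      · simp only [lam, lamL_map_range]
        rw [Finset.sum_comm]
  | c14 α β n m F _ hn hm =>
      constructor
      · simp only [hgt, hgtL_map_range]
        rw [sup_range_add 1 _ n hn, sup_range_add 1 _ m hm, Finset.sup_comm]
      · simp only [lam, lamL_map_range]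
        rw [Finset.sum_comm]
  | c19 α β n m F _ hn hm =>
      constructor
      · simp only [hgt, hgtL_map_range]
        rw [sup_range_add 1 _ n hn, sup_range_add 1 _ m hm, Finset.sup_comm]
      · simp only [lam, lamL_map_range]
        rw [Finset.sum_comm]
  | c15 α β n k F _ hn =>
      constructor
      · simp only [hgt, hgtL_map_range]
        rw [sup_range_add 1 _ n hn]
      · simp only [lam, lamL_map_range]
  | c17 α β n k F _ hn =>
      constructor
      · simp only [hgt, hgtL_map_range]
        rw [sup_range_add 1 _ n hn]
      · simp only [lam, lamL_map_range]
  | c16 α β m k F _ hm =>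
      constructor
      · simp only [hgt, hgtL_map_range]
        rw [sup_range_add 1 _ m hm]
      · simp only [lam, lamL_map_range]
  | c18 α β m k F _ hm =>
      constructor
      · simp only [hgt, hgtL_map_range]
        rw [sup_range_add 1 _ m hm]
      · simp only [lam, lamL_map_range]
  | c20 α β k l f _ => exact ⟨by simp [hgt, Nat.add_assoc], rfl⟩
  | c21 α β k l f _ => exact ⟨by simp [hgt, Nat.add_assoc], rfl⟩
  | c22 α β k l f _ => exact ⟨by simp [hgt, Nat.add_assoc], rfl⟩
  | symm _ ih => exact ⟨ih.1.symm, ih.2.symm⟩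
  | cotC α l r _ ih =>
      constructor
      · simp only [hgt, hgtL_append, hgtL, ih.1]
      · simp only [lam, lamL_append, lamL, ih.2]
  | tupC α l r _ ih =>
      constructor
      · simp only [hgt, hgtL_append, hgtL, ih.1]
      · simp only [lam, lamL_append, lamL, ih.2]
  | prjC α k _ ih => exact ⟨by simp only [hgt, ih.1], ih.2⟩
  | injC α k _ ih => exact ⟨by simp only [hgt, ih.1], ih.2⟩
  | cutL γ g _ ih =>
      exact ⟨by simp only [hgt, ih.1], by simp only [lam, hgt, ih.1, ih.2]⟩
  | cutR γ f _ ih =>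
      exact ⟨by simp only [hgt, ih.1], by simp only [lam, hgt, ih.1, ih.2]⟩

theorem cut_measure :
    (∀ t₁ t₂ : Tm Ax Chan, Red t₁ t₂ → DMlt (lam t₂) (lam t₁)) ∧
    (∀ t₁ t₂ : Tm Ax Chan, PcNN t₁ t₂ → lam t₁ = lam t₂) := by
  exact ⟨fun _ _ h => (red_main h).2, fun _ _ h => (pc_main h).2⟩

end Stmt1
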